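/- Let X be a nonempty Tychonoff space. The assignment F ↦ μ_F, where μ_F(f) := inf{βf(x) : x ∈ F} for f ∈ C*(X), is a bijection from the collection of all nonempty closed subsets of βX onto R_min(X), and S(μ_F) = F for every nonempty closed F ⊆ βX. Moreover, it restricts to a bijection from {F : F nonempty compact, F ⊆ η(X)} onto R_min(X)_c. -/

import Mathlib

open Set

/-- The Čech–Stone extension `βf : βX → ℝ` of a bounded continuous function `f : X → ℝ`
(obtained by extending `f`, viewed as a map into the compact interval `[-‖f‖, ‖f‖]`,
over the Stone–Čech compactification). -/
noncomputable def betaExt {X : Type*} [TopologicalSpace X] (f : BoundedContinuousFunction X ℝ) :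
    StoneCech X → ℝ :=
  Subtype.val ∘ stoneCechExtend
    (Continuous.subtype_mk f.continuous
      (fun x => Set.mem_Icc.mpr (abs_le.mp (Real.norm_eq_abs (f x) ▸ f.norm_coe_le_norm x)))
      : Continuous fun x => (⟨f x, _⟩ : Set.Icc (-‖f‖) ‖f‖))

variable {X : Type*} [TopologicalSpace X]

/-- `μ` is *normed*: `μ 1 = 1`. -/
def BNormed (μ : BoundedContinuousFunction X ℝ → ℝ) : Prop := μ 1 = 1

/-- `μ` is *weakly additive*: `μ (f + c·1) = μ f + c`. -/
def BWeaklyAdditive (μ : BoundedContinuousFunction X ℝ → ℝ) : Prop :=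
  ∀ (f : BoundedContinuousFunction X ℝ) (c : ℝ),
    μ (f + BoundedContinuousFunction.const X c) = μ f + c

/-- `μ` *preserves min*. -/
def BPreservesMin (μ : BoundedContinuousFunction X ℝ → ℝ) : Prop :=
  ∀ f g : BoundedContinuousFunction X ℝ, μ (f ⊓ g) = min (μ f) (μ g)

/-- `μ` *preserves max*. -/
def BPreservesMax (μ : BoundedContinuousFunction X ℝ → ℝ) : Prop :=
  ∀ f g : BoundedContinuousFunction X ℝ, μ (f ⊔ g) = max (μ f) (μ g)

/-- `μ` *weakly preserves min*: `μ (min{f, c·1}) = min{μ f, c}`. -/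
def BWeaklyPreservesMin (μ : BoundedContinuousFunction X ℝ → ℝ) : Prop :=
  ∀ (f : BoundedContinuousFunction X ℝ) (c : ℝ),
    μ (f ⊓ BoundedContinuousFunction.const X c) = min (μ f) c

/-- `μ` *weakly preserves max*: `μ (max{f, c·1}) = max{μ f, c}`. -/
def BWeaklyPreservesMax (μ : BoundedContinuousFunction X ℝ → ℝ) : Prop :=
  ∀ (f : BoundedContinuousFunction X ℝ) (c : ℝ),
    μ (f ⊔ BoundedContinuousFunction.const X c) = max (μ f) c

/-- The support `S(μ) ⊆ βX` of a functional `μ` on `C*(X)`: points `p ∈ βX` such that every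
open neighbourhood `O` of `p` admits `f, g ∈ C*(X)` with `βf = βg` off `O` and `μ f ≠ μ g`. -/
def betaSupport (μ : BoundedContinuousFunction X ℝ → ℝ) : Set (StoneCech X) :=
  {p | ∀ O : Set (StoneCech X), IsOpen O → p ∈ O →
    ∃ f g : BoundedContinuousFunction X ℝ,
      (∀ q ∉ O, betaExt f q = betaExt g q) ∧ μ f ≠ μ g}

/-- `R_min(X)`: normed, weakly additive functionals preserving min and weakly preserving max. -/
def RMin (X : Type*) [TopologicalSpace X] : Set (BoundedContinuousFunction X ℝ → ℝ) :=
  {μ | BNormed μ ∧ BWeaklyAdditive μ ∧ BPreservesMin μ ∧ BWeaklyPreservesMax μ}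

/-- `R_max(X)`: normed, weakly additive functionals preserving max and weakly preserving min. -/
def RMax (X : Type*) [TopologicalSpace X] : Set (BoundedContinuousFunction X ℝ → ℝ) :=
  {μ | BNormed μ ∧ BWeaklyAdditive μ ∧ BPreservesMax μ ∧ BWeaklyPreservesMin μ}

/-- `R_min(X)_c`: members of `R_min(X)` with compact support, i.e. `∅ ≠ S(μ) ⊆ η(X)`. -/
def RMinC (X : Type*) [TopologicalSpace X] : Set (BoundedContinuousFunction X ℝ → ℝ) :=
  {μ | μ ∈ RMin X ∧ (betaSupport μ).Nonempty ∧
    betaSupport μ ⊆ Set.range (stoneCechUnit : X → StoneCech X)}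

/-- `R_max(X)_c`: members of `R_max(X)` with compact support, i.e. `∅ ≠ S(μ) ⊆ η(X)`. -/
def RMaxC (X : Type*) [TopologicalSpace X] : Set (BoundedContinuousFunction X ℝ → ℝ) :=
  {μ | μ ∈ RMax X ∧ (betaSupport μ).Nonempty ∧
    betaSupport μ ⊆ Set.range (stoneCechUnit : X → StoneCech X)}


lemma betaExt_continuous (f : BoundedContinuousFunction X ℝ) : Continuous (betaExt f) :=
  continuous_subtype_val.comp (continuous_stoneCechExtend _)

lemma betaExt_mem (f : BoundedContinuousFunction X ℝ) (p : StoneCech X) :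
    betaExt f p ∈ Set.Icc (-‖f‖) ‖f‖ :=
  (stoneCechExtend (Continuous.subtype_mk f.continuous
      (fun x => Set.mem_Icc.mpr (abs_le.mp (Real.norm_eq_abs (f x) ▸ f.norm_coe_le_norm x)))) p).2

lemma betaExt_unit (f : BoundedContinuousFunction X ℝ) (x : X) :
    betaExt f (stoneCechUnit x) = f x :=
  congrArg Subtype.val (congrFun (stoneCechExtend_extends (Continuous.subtype_mk f.continuous
      (fun x => Set.mem_Icc.mpr (abs_le.mp (Real.norm_eq_abs (f x) ▸ f.norm_coe_le_norm x))))) x)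

lemma betaExt_eq {f : BoundedContinuousFunction X ℝ} {F : StoneCech X → ℝ}
    (hF : Continuous F) (h : ∀ x, F (stoneCechUnit x) = f x) : betaExt f = F :=
  denseRange_stoneCechUnit.equalizer (betaExt_continuous f) hF
    (funext fun x => (betaExt_unit f x).trans (h x).symm)

lemma betaExt_one : betaExt (1 : BoundedContinuousFunction X ℝ) = fun _ => 1 :=
  betaExt_eq continuous_const (fun x => rfl)

lemma betaExt_const (c : ℝ) :
    betaExt (BoundedContinuousFunction.const X c) = fun _ => c :=
  betaExt_eq continuous_const (fun x => rfl)

lemma betaExt_add_const (f : BoundedContinuousFunction X ℝ) (c : ℝ) :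
    betaExt (f + BoundedContinuousFunction.const X c) = fun p => betaExt f p + c :=
  betaExt_eq ((betaExt_continuous f).add continuous_const)
    (fun x => by simp [betaExt_unit])

lemma betaExt_inf (f g : BoundedContinuousFunction X ℝ) :
    betaExt (f ⊓ g) = fun p => min (betaExt f p) (betaExt g p) :=
  betaExt_eq ((betaExt_continuous f).min (betaExt_continuous g))
    (fun x => by simp [betaExt_unit])

lemma betaExt_sup (f g : BoundedContinuousFunction X ℝ) :
    betaExt (f ⊔ g) = fun p => max (betaExt f p) (betaExt g p) :=
  betaExt_eq ((betaExt_continuous f).max (betaExt_continuous g))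
    (fun x => by simp [betaExt_unit])

lemma betaExt_smul (L : ℝ) (f : BoundedContinuousFunction X ℝ) :
    betaExt (L • f) = fun p => L * betaExt f p :=
  betaExt_eq (continuous_const.mul (betaExt_continuous f))
    (fun x => by simp [betaExt_unit])

/-- A continuous function on `StoneCech X` restricted to `X` as a bounded continuous function. -/
noncomputable def ofBeta (G : C(StoneCech X, ℝ)) : BoundedContinuousFunction X ℝ :=
  (BoundedContinuousFunction.mkOfCompact G).compContinuous
    ⟨stoneCechUnit, continuous_stoneCechUnit⟩

lemma betaExt_ofBeta (G : C(StoneCech X, ℝ)) : betaExt (ofBeta G) = G :=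
  betaExt_eq G.continuous (fun x => rfl)

section Mu

lemma mu_const (hn : BNormed μ) (hw : BWeaklyAdditive μ) (c : ℝ) :
    μ (BoundedContinuousFunction.const X c) = c := by
  have h0 : μ 0 = 0 := by
    have h1 := hw 0 1
    have : (0 : BoundedContinuousFunction X ℝ) + BoundedContinuousFunction.const X 1 = 1 := by
      ext x; simp
    rw [this, hn] at h1; linarith
  have := hw 0 c
  have h2 : (0 : BoundedContinuousFunction X ℝ) + BoundedContinuousFunction.const X c
      = BoundedContinuousFunction.const X c := by ext x; simp
  rw [h2, h0] at this; linarith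

lemma mu_mono (hm : BPreservesMin μ) {f g : BoundedContinuousFunction X ℝ}
    (h : f ≤ g) : μ f ≤ μ g := by
  have : f ⊓ g = f := inf_eq_left.mpr h
  have := hm f g
  rw [‹f ⊓ g = f›] at this
  exact min_eq_left_iff.mp this.symm

lemma mu_ge_const (hn : BNormed μ) (hw : BWeaklyAdditive μ) (hm : BPreservesMin μ)
    {f : BoundedContinuousFunction X ℝ} {c : ℝ} (h : ∀ x, c ≤ f x) : c ≤ μ f := by
  have hle : BoundedContinuousFunction.const X c ≤ f := by
    intro x; simpa using h x
  calc c = μ (BoundedContinuousFunction.const X c) := (mu_const hn hw c).symm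
    _ ≤ μ f := mu_mono hm hle

lemma mu_le_const (hn : BNormed μ) (hw : BWeaklyAdditive μ) (hm : BPreservesMin μ)
    {f : BoundedContinuousFunction X ℝ} {c : ℝ} (h : ∀ x, f x ≤ c) : μ f ≤ c := by
  have hle : f ≤ BoundedContinuousFunction.const X c := by
    intro x; simpa using h x
  calc μ f ≤ μ (BoundedContinuousFunction.const X c) := mu_mono hm hle
    _ = c := mu_const hn hw c

end Mu

section Mu2
variable {μ : BoundedContinuousFunction X ℝ → ℝ}

lemma mu_smul (hμ : μ ∈ RMin X) {L : ℝ} (hL : 1 ≤ L) (f : BoundedContinuousFunction X ℝ) :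
    μ (L • f) = L * μ f := by
  obtain ⟨hn, hw, hm, hx⟩ := hμ
  have hL0 : (0:ℝ) < L := by linarith
  set t := μ (L • f) with ht
  have hcancel : t / L * L = t := div_mul_cancel₀ t (ne_of_gt hL0)
  -- upper bound : f ≤ ((L•f) ⊔ const t) + const (t/L - t)
  have hub : f ≤ ((L • f) ⊔ BoundedContinuousFunction.const X t)
      + BoundedContinuousFunction.const X (t / L - t) := by
    intro x
    simp only [ContinuousMap.toFun_eq_coe, BoundedContinuousFunction.coe_toContinuousMap,
      BoundedContinuousFunction.coe_add, BoundedContinuousFunction.coe_sup,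
      BoundedContinuousFunction.coe_smul, smul_eq_mul,
      BoundedContinuousFunction.const_apply', Pi.add_apply, Pi.sup_apply]
    rcases le_total (L * f x) t with h | h
    · rw [sup_eq_right.mpr h]; nlinarith
    · rw [sup_eq_left.mpr h]; nlinarith
  have h1 : μ f ≤ t / L := by
    have := mu_mono hm hub
    rw [hw, hx] at this
    rw [max_eq_right (le_refl t)] at this
    linarith
  -- lower bound : ((L•f) ⊓ const t) + const (t/L - t) ≤ f
  have hlb : ((L • f) ⊓ BoundedContinuousFunction.const X t)
      + BoundedContinuousFunction.const X (t / L - t) ≤ f := by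
    intro x
    simp only [ContinuousMap.toFun_eq_coe, BoundedContinuousFunction.coe_toContinuousMap,
      BoundedContinuousFunction.coe_add, BoundedContinuousFunction.coe_inf,
      BoundedContinuousFunction.coe_smul, smul_eq_mul,
      BoundedContinuousFunction.const_apply', Pi.add_apply, Pi.inf_apply]
    rcases le_total (L * f x) t with h | h
    · rw [inf_eq_left.mpr h]; nlinarith
    · rw [inf_eq_right.mpr h]; nlinarith
  have h2 : t / L ≤ μ f := by
    have := mu_mono hm hlb
    rw [hw, hm] at this
    rw [mu_const hn hw, min_self] at this
    linarith
  have : μ f = t / L := le_antisymm h1 h2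
  rw [this]; field_simp

end Mu2

section Pair
variable {μ : BoundedContinuousFunction X ℝ → ℝ}

lemma mu_pair [Nonempty X] (hμ : μ ∈ RMin X) (f g : BoundedContinuousFunction X ℝ) :
    ∃ p, betaExt f p ≤ μ f ∧ μ g ≤ betaExt g p := by
  have hn := hμ.1; have hw := hμ.2.1; have hm := hμ.2.2.1; have hwm := hμ.2.2.2
  by_contra hcon
  push_neg at hcon
  set d := μ g with hd
  haveI : Nonempty (StoneCech X) := ⟨stoneCechUnit (Classical.arbitrary X)⟩
  obtain ⟨p₀, -, hp₀⟩ := isCompact_univ.exists_isMinOn univ_nonempty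
    (betaExt_continuous f).continuousOn
  have hμf : betaExt f p₀ ≤ μ f :=
    mu_ge_const hn hw hm (fun x => by
      simpa [betaExt_unit] using hp₀ (mem_univ (stoneCechUnit x)))
  set A := {p : StoneCech X | betaExt f p ≤ μ f} with hA
  have hAc : IsClosed A := isClosed_le (betaExt_continuous f) continuous_const
  have hAne : A.Nonempty := ⟨p₀, hμf⟩
  have himg : IsCompact (betaExt g '' A) := (hAc.isCompact).image (betaExt_continuous g)
  have himgne : (betaExt g '' A).Nonempty := hAne.image (betaExt g)
  set c' := sSup (betaExt g '' A) with hc'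
  obtain ⟨pₛ, hpₛA, hpₛ⟩ : ∃ p ∈ A, betaExt g p = c' := by
    obtain ⟨p, hp1, hp2⟩ := himg.sSup_mem himgne
    exact ⟨p, hp1, hp2⟩
  have hc'd : c' < d := hpₛ ▸ hcon pₛ hpₛA
  set c := (c' + d)/2 with hcdef
  have hcc : c' < c := by rw [hcdef]; linarith
  have hcd : c < d := by rw [hcdef]; linarith
  -- find δ > 0 with {βf ≤ μf + δ} ∩ {c ≤ βg} = ∅
  have hK : ∃ n : ℕ, ({p : StoneCech X | betaExt f p ≤ μ f + 1/((n:ℝ)+1)}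
      ∩ {p | c ≤ betaExt g p}) = ∅ := by
    by_contra hKc
    push_neg at hKc
    set K : ℕ → Set (StoneCech X) := fun n =>
      {p | betaExt f p ≤ μ f + 1/((n:ℝ)+1)} ∩ {p | c ≤ betaExt g p} with hKdef
    have hcl : ∀ n, IsClosed (K n) := fun n =>
      (isClosed_le (betaExt_continuous f) continuous_const).inter
      (isClosed_le continuous_const (betaExt_continuous g))
    have hmono : ∀ {m n : ℕ}, m ≤ n → K n ⊆ K m := by
      intro m n hmn p hp
      obtain ⟨h1, h2⟩ := hp
      simp only [mem_setOf_eq] at h1 ⊢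
      refine ⟨le_trans h1 ?_, h2⟩
      have : 1/((n:ℝ)+1) ≤ 1/((m:ℝ)+1) := by
        apply one_div_le_one_div_of_le (by positivity)
        have : (m:ℝ) ≤ (n:ℝ) := Nat.cast_le.mpr hmn
        linarith
      linarith
    have hdir : Directed (· ⊇ ·) K := fun m n =>
      ⟨max m n, hmono (le_max_left m n), hmono (le_max_right m n)⟩
    obtain ⟨p, hp⟩ := IsCompact.nonempty_iInter_of_directed_nonempty_isCompact_isClosed K
      hdir (fun n => hKc n)
      (fun n => (hcl n).isCompact) hcl
    have hpK : ∀ n : ℕ, p ∈ K n := fun n => mem_iInter.mp hp n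
    have h1 : betaExt f p ≤ μ f := by
      apply le_of_forall_pos_le_add
      intro ε hε
      obtain ⟨n, hn'⟩ := exists_nat_one_div_lt hε
      exact le_trans (hpK n).1 (by push_cast; push_cast at hn'; linarith)
    have h2 : betaExt g p ≤ c' := le_csSup himg.bddAbove ⟨p, h1, rfl⟩
    have h3 : c ≤ betaExt g p := (hpK 0).2
    linarith
  obtain ⟨n, hKn⟩ := hK
  set δ := 1/((n:ℝ)+1) with hδdef
  have hδ : 0 < δ := by positivity
  have hX : ∀ x : X, f x ≤ μ f + δ → g x ≤ c := by
    intro x hfx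
    by_contra hgx
    push_neg at hgx
    have hmem : stoneCechUnit x ∈ ({p : StoneCech X | betaExt f p ≤ μ f + 1/((n:ℝ)+1)}
        ∩ {p | c ≤ betaExt g p}) :=
      ⟨by simpa [betaExt_unit, ← hδdef] using hfx, by simp [betaExt_unit]; linarith⟩
    rw [hKn] at hmem
    exact hmem
  set M := max ‖g‖ c with hM
  have hcM : c ≤ M := le_max_right _ _
  set L := max 1 (2*(M - c)/δ) with hL
  have hL1 : (1:ℝ) ≤ L := le_max_left _ _
  have hL0 : (0:ℝ) < L := by linarith
  have hLδ : M - c ≤ L * δ / 2 := by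
    have h2 : 2*(M - c)/δ ≤ L := le_max_right _ _
    have := (div_le_iff₀ hδ).mp h2
    linarith
  set b := c - L*(μ f + δ/2) with hb
  set k := BoundedContinuousFunction.const X c ⊔
    ((L • f + BoundedContinuousFunction.const X b) ⊓ BoundedContinuousFunction.const X M) with hk
  have hμk : μ k = c := by
    have e1 : μ (L • f + BoundedContinuousFunction.const X b) = L * μ f + b := by
      rw [hw, mu_smul hμ hL1]
    have e3 : k = ((L • f + BoundedContinuousFunction.const X b)
        ⊓ BoundedContinuousFunction.const X M) ⊔ BoundedContinuousFunction.const X c :=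
      sup_comm _ _
    rw [e3, hwm, hm, e1, mu_const hn hw]
    have hle : L * μ f + b ≤ c := by rw [hb]; nlinarith
    exact max_eq_right (le_trans (min_le_left _ _) hle)
  have hwk : g ⊔ BoundedContinuousFunction.const X c ≤ k := by
    intro x
    simp only [hk, ContinuousMap.toFun_eq_coe, BoundedContinuousFunction.coe_toContinuousMap,
      BoundedContinuousFunction.coe_sup, BoundedContinuousFunction.coe_inf,
      BoundedContinuousFunction.coe_add, BoundedContinuousFunction.coe_smul, smul_eq_mul,
      BoundedContinuousFunction.const_apply', Pi.sup_apply, Pi.inf_apply, Pi.add_apply]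
    rcases le_total (f x) (μ f + δ) with hc1 | hc2
    · have hg := hX x hc1
      have : g x ⊔ c = c := sup_eq_right.mpr hg
      rw [this]
      exact le_sup_left
    · have hM2 : M ≤ L * f x + b := by rw [hb]; nlinarith
      have hgM : g x ≤ M := le_trans (le_trans (le_abs_self _)
        (g.norm_coe_le_norm x)) (le_max_left _ _)
      have hr : (L * f x + b) ⊓ M = M := inf_eq_right.mpr hM2
      rw [hr]
      exact sup_le (le_sup_of_le_right hgM) (le_sup_left)
  have hμw : μ (g ⊔ BoundedContinuousFunction.const X c) = d := by
    rw [hwm, ← hd]; exact max_eq_left (le_of_lt hcd)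
  have := mu_mono hm hwk
  rw [hμk, hμw] at this
  linarith

end Pair

section Repr
variable {μ : BoundedContinuousFunction X ℝ → ℝ}

lemma mu_finset_inf' (hn : BPreservesMin μ) {ι : Type*} {u : Finset ι} (hu : u.Nonempty)
    (v : ι → BoundedContinuousFunction X ℝ) :
    μ (u.inf' hu v) = u.inf' hu (fun i => μ (v i)) := by
  induction hu using Finset.Nonempty.cons_induction with
  | singleton a => simp
  | cons a s ha hs ih =>
    rw [Finset.inf'_cons hs, Finset.inf'_cons hs, hn, ih]

lemma betaExt_finset_inf' {ι : Type*} {u : Finset ι} (hu : u.Nonempty)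
    (v : ι → BoundedContinuousFunction X ℝ) (p : StoneCech X) :
    betaExt (u.inf' hu v) p = u.inf' hu (fun i => betaExt (v i) p) := by
  induction hu using Finset.Nonempty.cons_induction with
  | singleton a => simp
  | cons a s ha hs ih =>
    rw [Finset.inf'_cons hs, Finset.inf'_cons hs, betaExt_inf, ← ih]

lemma mu_repr [Nonempty X] (hμ : μ ∈ RMin X) :
    ∃ F : Set (StoneCech X), F.Nonempty ∧ IsClosed F ∧
      ∀ f, μ f = sInf (betaExt f '' F) := by
  have hn := hμ.1; have hw := hμ.2.1; have hm := hμ.2.2.1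
  set F := ⋂ g : BoundedContinuousFunction X ℝ, {p | μ g ≤ betaExt g p} with hF
  have hFcl : IsClosed F :=
    isClosed_iInter (fun g => isClosed_le continuous_const (betaExt_continuous g))
  have key : ∀ f : BoundedContinuousFunction X ℝ, ∃ p ∈ F, betaExt f p ≤ μ f := by
    intro f
    set A := {p : StoneCech X | betaExt f p ≤ μ f} with hA
    have hAcl : IsClosed A := isClosed_le (betaExt_continuous f) continuous_const
    have hAne : A.Nonempty := by
      obtain ⟨p, hp1, _⟩ := mu_pair hμ f f
      exact ⟨p, hp1⟩
    by_contra hcon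
    push_neg at hcon
    have hAF : A ∩ F = ∅ := by
      rw [Set.eq_empty_iff_forall_notMem]
      rintro p ⟨hpA, hpF⟩
      exact absurd hpA (not_le.mpr (hcon p hpF))
    obtain ⟨u, hu⟩ := hAcl.isCompact.elim_finite_subfamily_closed
      (fun g : BoundedContinuousFunction X ℝ => {p | μ g ≤ betaExt g p})
      (fun g => isClosed_le continuous_const (betaExt_continuous g)) hAF
    rcases u.eq_empty_or_nonempty with hue | hune
    · rw [hue] at hu
      simp at hu
      obtain ⟨p, hp⟩ := hAne
      exact Set.eq_empty_iff_forall_notMem.mp hu p hp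
    · set v : BoundedContinuousFunction X ℝ → BoundedContinuousFunction X ℝ :=
        fun g => g + BoundedContinuousFunction.const X (-(μ g)) with hv
      set gs := u.inf' hune v with hgs
      have hveq : ∀ g ∈ u, μ (v g) = 0 := by
        intro g _
        rw [hv]
        simp only
        rw [hw]
        ring
      have hμgs : μ gs = 0 := by
        rw [hgs, mu_finset_inf' hm, Finset.inf'_congr hune rfl hveq]
        exact Finset.inf'_const hune 0
      obtain ⟨p, hp1, hp2⟩ := mu_pair hμ f gs
      rw [hμgs] at hp2
      have hpall : ∀ g ∈ u, μ g ≤ betaExt g p := by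
        intro g hg
        have := (Finset.le_inf'_iff hune (fun i => betaExt (v i) p)).mp
          (le_of_le_of_eq hp2 (betaExt_finset_inf' hune v p)) g hg
        rw [hv, betaExt_add_const] at this
        simp only at this
        linarith
      have : p ∈ A ∩ ⋂ g ∈ u, {q | μ g ≤ betaExt g q} := by
        refine ⟨hp1, ?_⟩
        simp only [mem_iInter]
        intro g hg
        exact hpall g hg
      rw [hu] at this
      exact this
  obtain ⟨p₁, hp₁, _⟩ := key 0
  have hFne : F.Nonempty := ⟨p₁, hp₁⟩
  refine ⟨F, hFne, hFcl, fun f => ?_⟩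
  have hbdd : BddBelow (betaExt f '' F) :=
    ⟨-‖f‖, by rintro y ⟨p, -, rfl⟩; exact (betaExt_mem f p).1⟩
  obtain ⟨p, hpF, hple⟩ := key f
  apply le_antisymm
  · exact le_csInf (hFne.image _) (by rintro y ⟨q, hqF, rfl⟩; exact mem_iInter.mp hqF f)
  · exact le_trans (csInf_le hbdd ⟨p, hpF, rfl⟩) hple

end Repr

section Fwd
variable {F : Set (StoneCech X)}

lemma sInf_image_mono {S : Set ℝ} (hS : IsCompact S) (hne : S.Nonempty) {φ : ℝ → ℝ}
    (hmono : Monotone φ) : sInf (φ '' S) = φ (sInf S) := by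
  have hm : sInf S ∈ S := hS.sInf_mem hne
  have hbb : BddBelow (φ '' S) :=
    ⟨φ (sInf S), by rintro y ⟨s, hs, rfl⟩; exact hmono (csInf_le hS.bddBelow hs)⟩
  apply le_antisymm
  · exact csInf_le hbb ⟨sInf S, hm, rfl⟩
  · exact le_csInf (hne.image φ) (by rintro y ⟨s, hs, rfl⟩; exact hmono (csInf_le hS.bddBelow hs))

lemma muF_bddBelow (f : BoundedContinuousFunction X ℝ) (F : Set (StoneCech X)) :
    BddBelow (betaExt f '' F) :=
  ⟨-‖f‖, by rintro y ⟨p, -, rfl⟩; exact (betaExt_mem f p).1⟩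

lemma muF_attained (hne : F.Nonempty) (hcl : IsClosed F) (f : BoundedContinuousFunction X ℝ) :
    ∃ p ∈ F, betaExt f p = sInf (betaExt f '' F) := by
  have : sInf (betaExt f '' F) ∈ betaExt f '' F :=
    (hcl.isCompact.image (betaExt_continuous f)).sInf_mem (hne.image _)
  obtain ⟨p, hp1, hp2⟩ := this
  exact ⟨p, hp1, hp2⟩

lemma muF_mem_RMin (hne : F.Nonempty) (hcl : IsClosed F) :
    (fun f : BoundedContinuousFunction X ℝ => sInf (betaExt f '' F)) ∈ RMin X := by
  have hFc : IsCompact F := hcl.isCompact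
  refine ⟨?_, ?_, ?_, ?_⟩
  · -- normed
    show sInf (betaExt 1 '' F) = 1
    rw [betaExt_one, hne.image_const, csInf_singleton]
  · -- weakly additive
    intro f c
    simp only
    rw [betaExt_add_const]
    have : (fun p => betaExt f p + c) '' F = (fun y => y + c) '' (betaExt f '' F) := by
      rw [Set.image_image]
    rw [this, sInf_image_mono (hFc.image (betaExt_continuous f)) (hne.image _)
      (fun a b hab => by simpa using hab)]
  · -- preserves min
    intro f g
    simp only
    rw [betaExt_inf]
    have hb : BddBelow ((fun p => betaExt f p ⊓ betaExt g p) '' F) := by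
      refine ⟨min (-‖f‖) (-‖g‖), ?_⟩
      rintro y ⟨q, -, rfl⟩
      exact min_le_min (betaExt_mem f q).1 (betaExt_mem g q).1
    apply le_antisymm
    · rcases le_total (sInf (betaExt f '' F)) (sInf (betaExt g '' F)) with h | h
      · rw [min_eq_left h]
        obtain ⟨p, hpF, hp⟩ := muF_attained hne hcl f
        refine le_trans (csInf_le hb ⟨p, hpF, rfl⟩) (le_trans (min_le_left _ _) hp.le)
      · rw [min_eq_right h]
        obtain ⟨p, hpF, hp⟩ := muF_attained hne hcl g
        refine le_trans (csInf_le hb ⟨p, hpF, rfl⟩) (le_trans (min_le_right _ _) hp.le)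
    · apply le_csInf (hne.image _)
      rintro y ⟨p, hpF, rfl⟩
      exact min_le_min (csInf_le (muF_bddBelow f F) ⟨p, hpF, rfl⟩)
        (csInf_le (muF_bddBelow g F) ⟨p, hpF, rfl⟩)
  · -- weakly preserves max
    intro f c
    simp only
    have heq : betaExt (f ⊔ BoundedContinuousFunction.const X c) = fun p => max (betaExt f p) c :=
      betaExt_eq ((betaExt_continuous f).max continuous_const)
        (fun x => by simp [betaExt_unit])
    rw [heq]
    have : (fun p => max (betaExt f p) c) '' F = (fun y => max y c) '' (betaExt f '' F) := by
      rw [Set.image_image]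
    rw [this, sInf_image_mono (hFc.image (betaExt_continuous f)) (hne.image _)
      (fun a b hab => max_le_max hab (le_refl c))]

end Fwd

section Supp
variable {F : Set (StoneCech X)}

lemma muF_support (hne : F.Nonempty) (hcl : IsClosed F) :
    betaSupport (fun f : BoundedContinuousFunction X ℝ => sInf (betaExt f '' F)) = F := by
  apply Set.Subset.antisymm
  · intro p hp
    by_contra hpF
    obtain ⟨f, g, heq, hneq⟩ := hp Fᶜ hcl.isOpen_compl hpF
    apply hneq
    simp only
    congr 1
    apply Set.image_congr
    intro q hq
    exact heq q (by simpa using hq)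
  · intro p hpF O hO hpO
    obtain ⟨φ, hφ0, hφ1, hφmem⟩ := exists_continuous_zero_one_of_isClosed
      (isClosed_singleton (x := p)) hO.isClosed_compl
      (Set.disjoint_singleton_left.mpr (by simpa using hpO))
    refine ⟨ofBeta φ, 1, ?_, ?_⟩
    · intro q hq
      rw [betaExt_ofBeta, betaExt_one]
      exact hφ1 hq
    · simp only
      rw [betaExt_ofBeta, betaExt_one, hne.image_const, csInf_singleton]
      have hbdd : BddBelow (⇑φ '' F) := ⟨0, by rintro y ⟨q, -, rfl⟩; exact (hφmem q).1⟩
      have h0 : sInf (⇑φ '' F) ≤ 0 := csInf_le hbdd ⟨p, hpF, hφ0 rfl⟩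
      intro hcontra
      rw [hcontra] at h0
      norm_num at h0

end Supp
/-- for nonempty Tychonoff `X`, the assignment `F ↦ μ_F` with
`μ_F f = inf {βf p : p ∈ F}` is a bijection from the nonempty closed subsets of `βX` onto
`R_min(X)` with `S(μ_F) = F`, restricting to a bijection from the nonempty compact subsets
of `η(X)` onto `R_min(X)_c`. -/
theorem statement10 (X : Type*) [TopologicalSpace X] [T35Space X] [Nonempty X] :
    (∀ F : Set (StoneCech X), F.Nonempty → IsClosed F →
      (fun f : BoundedContinuousFunction X ℝ => sInf (betaExt f '' F)) ∈ RMin X ∧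
      betaSupport (fun f : BoundedContinuousFunction X ℝ => sInf (betaExt f '' F)) = F) ∧
    (∀ F G : Set (StoneCech X), F.Nonempty → IsClosed F → G.Nonempty → IsClosed G →
      (fun f : BoundedContinuousFunction X ℝ => sInf (betaExt f '' F)) =
        (fun f : BoundedContinuousFunction X ℝ => sInf (betaExt f '' G)) → F = G) ∧
    (∀ μ ∈ RMin X, ∃ F : Set (StoneCech X), F.Nonempty ∧ IsClosed F ∧
      μ = fun f : BoundedContinuousFunction X ℝ => sInf (betaExt f '' F)) ∧
    (∀ F : Set (StoneCech X), F.Nonempty → IsCompact F →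
      F ⊆ Set.range (stoneCechUnit : X → StoneCech X) →
      (fun f : BoundedContinuousFunction X ℝ => sInf (betaExt f '' F)) ∈ RMinC X) ∧
    (∀ μ ∈ RMinC X, ∃ F : Set (StoneCech X), F.Nonempty ∧ IsCompact F ∧
      F ⊆ Set.range (stoneCechUnit : X → StoneCech X) ∧
      μ = fun f : BoundedContinuousFunction X ℝ => sInf (betaExt f '' F)) := by
  classical
  have part1 : ∀ F : Set (StoneCech X), F.Nonempty → IsClosed F →
      (fun f : BoundedContinuousFunction X ℝ => sInf (betaExt f '' F)) ∈ RMin X ∧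
      betaSupport (fun f : BoundedContinuousFunction X ℝ => sInf (betaExt f '' F)) = F :=
    fun F hne hcl => ⟨muF_mem_RMin hne hcl, muF_support hne hcl⟩
  refine ⟨part1, ?_, ?_, ?_, ?_⟩
  · intro F G hFne hFcl hGne hGcl heq
    have h1 := (part1 F hFne hFcl).2
    have h2 := (part1 G hGne hGcl).2
    rw [← h1, ← h2, heq]
  · intro μ hμ
    obtain ⟨F, hne, hcl, hrep⟩ := mu_repr hμ
    exact ⟨F, hne, hcl, funext hrep⟩
  · intro F hne hcomp hsub
    have hcl : IsClosed F := hcomp.isClosed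
    refine ⟨(part1 F hne hcl).1, ?_, ?_⟩
    · rw [(part1 F hne hcl).2]; exact hne
    · rw [(part1 F hne hcl).2]; exact hsub
  · intro μ hμ
    obtain ⟨hRMin, hsne, hsub⟩ := hμ
    obtain ⟨F, hne, hcl, hrep⟩ := mu_repr hRMin
    have hmu : μ = fun f : BoundedContinuousFunction X ℝ => sInf (betaExt f '' F) :=
      funext hrep
    have hsupp : betaSupport μ = F := by rw [hmu]; exact muF_support hne hcl
    refine ⟨F, hne, hcl.isCompact, ?_, hmu⟩
    rw [← hsupp]; exact hsub
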